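/- Let d ≥ 1, let Σ be a real symmetric positive-definite d×d matrix, and let G : ℝ^d → ℝ be continuous with 0 ≤ G(u) ≤ H(u) for all u ∈ ℝ^d, for some Schwartz function H ∈ S(ℝ^d). Then for every T > 0 there exists a constant C > 0 such that sup_{t ∈ [0, T]} S_t^Σ G(u) ≤ C / (1 + |u|^{2d}) for all u ∈ ℝ^d, where |·| is the Euclidean norm. -/

import Mathlib

open MeasureTheory Set Nat

/-- The quadratic form `w ↦ ⟨w, A w⟩ = ∑_i ∑_j w_i A_{ij} w_j`. -/
noncomputable def quadForm {d : ℕ} (A : Matrix (Fin d) (Fin d) ℝ)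
    (w : EuclideanSpace ℝ (Fin d)) : ℝ :=
  ∑ i, ∑ j, w i * A i j * w j

/-- The Gaussian heat semigroup `S_t^Σ` with covariance matrix `S`: `S_0^Σ G = G` and, for
`t > 0`, `S_t^Σ G(u) = ((2πt)^d det S)^{-1/2} ∫ G(v) exp(-⟨u-v, S⁻¹(u-v)⟩/(2t)) dv`. -/
noncomputable def heatSG {d : ℕ} (S : Matrix (Fin d) (Fin d) ℝ) (t : ℝ)
    (G : EuclideanSpace ℝ (Fin d) → ℝ) (u : EuclideanSpace ℝ (Fin d)) : ℝ :=
  if t = 0 then G u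
  else (Real.sqrt ((2 * Real.pi * t) ^ d * S.det))⁻¹ *
    ∫ v, G v * Real.exp (-(quadForm S⁻¹ (u - v)) / (2 * t))

private lemma quadForm_smul {d : ℕ} (A : Matrix (Fin d) (Fin d) ℝ) (c : ℝ)
    (w : EuclideanSpace ℝ (Fin d)) : quadForm A (c • w) = c ^ 2 * quadForm A w := by
  simp only [quadForm, Finset.mul_sum]
  refine Finset.sum_congr rfl fun i _ => Finset.sum_congr rfl fun j _ => ?_
  simp only [PiLp.smul_apply, smul_eq_mul]
  ring

private lemma quadForm_continuous {d : ℕ} (A : Matrix (Fin d) (Fin d) ℝ) :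
    Continuous (quadForm A) := by
  unfold quadForm
  exact continuous_finset_sum _ fun i _ => continuous_finset_sum _ fun j _ =>
    (((EuclideanSpace.proj i).continuous.mul continuous_const).mul
      (EuclideanSpace.proj j).continuous)

private lemma quadForm_pos {d : ℕ} {A : Matrix (Fin d) (Fin d) ℝ} (hA : A.PosDef)
    {w : EuclideanSpace ℝ (Fin d)} (hw : w ≠ 0) : 0 < quadForm A w := by
  have hx : (fun i => w i) ≠ (0 : Fin d → ℝ) := by
    intro h
    exact hw (by ext i; exact congrFun h i)
  have := hA.re_dotProduct_pos hx
  simpa [quadForm, dotProduct, Matrix.mulVec, Finset.mul_sum, mul_assoc] using this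

private lemma quadForm_lb {d : ℕ} (hd : 1 ≤ d) {A : Matrix (Fin d) (Fin d) ℝ}
    (hA : A.PosDef) :
    ∃ lam : ℝ, 0 < lam ∧ ∀ w : EuclideanSpace ℝ (Fin d), lam * ‖w‖ ^ 2 ≤ quadForm A w := by
  have hne : (Metric.sphere (0 : EuclideanSpace ℝ (Fin d)) 1).Nonempty := by
    refine ⟨EuclideanSpace.single ⟨0, hd⟩ (1:ℝ), ?_⟩
    simp [EuclideanSpace.norm_single]
  obtain ⟨w0, hw0, hmin⟩ := (isCompact_sphere (0 : EuclideanSpace ℝ (Fin d)) 1).exists_isMinOn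
    hne (quadForm_continuous A).continuousOn
  have hw0n : ‖w0‖ = 1 := by simpa using hw0
  have hw00 : w0 ≠ 0 := by intro h; rw [h] at hw0n; simp at hw0n
  refine ⟨quadForm A w0, quadForm_pos hA hw00, fun w => ?_⟩
  rcases eq_or_ne w 0 with rfl | hw
  · simp [quadForm]
  · have hn : 0 < ‖w‖ := norm_pos_iff.2 hw
    have hmem : ‖w‖⁻¹ • w ∈ Metric.sphere (0 : EuclideanSpace ℝ (Fin d)) 1 := by
      simp [norm_smul, abs_of_pos hn, inv_mul_cancel₀ hn.ne']
    have h1 : quadForm A w0 ≤ quadForm A (‖w‖⁻¹ • w) := hmin hmem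
    rw [quadForm_smul] at h1
    have h2 : quadForm A w0 ≤ quadForm A w / ‖w‖ ^ 2 := by
      rw [div_eq_inv_mul, ← inv_pow]; exact h1
    calc quadForm A w0 * ‖w‖ ^ 2 ≤ (quadForm A w / ‖w‖ ^ 2) * ‖w‖ ^ 2 := by gcongr
      _ = quadForm A w := by field_simp

private lemma pow_le_factorial_mul_exp (n : ℕ) {x : ℝ} (hx : 0 ≤ x) :
    x ^ n ≤ (n ! : ℝ) * Real.exp x := by
  have h := Real.sum_le_exp_of_nonneg hx (n+1)
  have h2 : x ^ n / (n ! : ℝ) ≤ ∑ i ∈ Finset.range (n+1), x ^ i / (i ! : ℝ) :=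
    Finset.single_le_sum (f := fun i => x ^ i / (i ! : ℝ)) (fun i _ => by positivity)
      (Finset.self_mem_range_succ n)
  have hn : (0:ℝ) < (n ! : ℝ) := by positivity
  rw [div_le_iff₀ hn] at h2
  calc x ^ n ≤ (∑ i ∈ Finset.range (n+1), x ^ i / (i ! : ℝ)) * (n ! : ℝ) := h2
    _ ≤ Real.exp x * (n ! : ℝ) := by gcongr
    _ = (n ! : ℝ) * Real.exp x := by ring

private lemma gauss_integrable {d : ℕ} {b : ℝ} (hb : 0 < b) :
    Integrable (fun v : EuclideanSpace ℝ (Fin d) => Real.exp (-b * ‖v‖ ^ 2)) := by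
  have h := (GaussianFourier.integrable_cexp_neg_mul_sq_norm_add
    (V := EuclideanSpace ℝ (Fin d)) (b := (b:ℂ)) (by simpa using hb) 0 0).norm
  simpa [Complex.norm_exp, ← Complex.ofReal_pow] using h

private lemma gauss_integral {d : ℕ} {b : ℝ} (hb : 0 < b) :
    ∫ v : EuclideanSpace ℝ (Fin d), Real.exp (-b * ‖v‖ ^ 2)
      = (Real.pi / b) ^ ((d : ℝ) / 2) := by
  rw [GaussianFourier.integral_rexp_neg_mul_sq_norm hb]
  norm_num [finrank_euclideanSpace_fin]

private lemma aux_poly (n : ℕ) {x a b : ℝ} (ha : 0 ≤ a) (hb : 0 ≤ b) (hx : 0 ≤ x)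
    (hxab : x ≤ a + b) : 1 + x ^ n ≤ (1 + 2 ^ n) * ((1 + a ^ n) * (1 + b ^ n)) := by
  have h1 : x ^ n ≤ (a + b) ^ n := pow_le_pow_left₀ hx hxab n
  have h2 : (a + b) ^ n ≤ 2 ^ n * (a ^ n + b ^ n) := by
    rcases le_total a b with hab | hab
    · calc (a + b) ^ n ≤ (2 * b) ^ n := by gcongr <;> linarith
        _ = 2 ^ n * b ^ n := mul_pow 2 b n
        _ ≤ 2 ^ n * (a ^ n + b ^ n) := by
            have : (0:ℝ) ≤ a ^ n := pow_nonneg ha n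
            nlinarith [pow_pos (show (0:ℝ) < 2 by norm_num) n]
    · calc (a + b) ^ n ≤ (2 * a) ^ n := by gcongr <;> linarith
        _ = 2 ^ n * a ^ n := mul_pow 2 a n
        _ ≤ 2 ^ n * (a ^ n + b ^ n) := by
            have : (0:ℝ) ≤ b ^ n := pow_nonneg hb n
            nlinarith [pow_pos (show (0:ℝ) < 2 by norm_num) n]
  have ha' : (0:ℝ) ≤ a ^ n := pow_nonneg ha n
  have hb' : (0:ℝ) ≤ b ^ n := pow_nonneg hb n
  have h2' : (0:ℝ) ≤ 2 ^ n := by positivity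
  nlinarith [mul_nonneg ha' hb', mul_nonneg (mul_nonneg h2' ha') hb']

set_option maxHeartbeats 1000000 in
/-- uniform-in-time polynomial decay of the heat semigroup applied to a
continuous function dominated by a Schwartz function. -/
theorem stmt5 (d : ℕ) (hd : 1 ≤ d) (S : Matrix (Fin d) (Fin d) ℝ) (hS : S.PosDef)
    (G : EuclideanSpace ℝ (Fin d) → ℝ) (hGcont : Continuous G)
    (H : SchwartzMap (EuclideanSpace ℝ (Fin d)) ℝ)
    (hGH : ∀ u, 0 ≤ G u ∧ G u ≤ H u)
    (T : ℝ) (hT : 0 < T) :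
    ∃ C > 0, ∀ t ∈ Icc (0:ℝ) T, ∀ u, heatSG S t G u ≤ C / (1 + ‖u‖ ^ (2 * d)) := by
  obtain ⟨lam, hlam, hquad⟩ := quadForm_lb hd hS.inv
  obtain ⟨C0, hC0pos, hC0⟩ := H.decay 0 0
  obtain ⟨C1, hC1pos, hC1⟩ := H.decay (2*d) 0
  have hHnorm : ∀ v, ‖H v‖ ≤ C0 := fun v => by simpa using hC0 v
  have hHnorm2 : ∀ v, ‖v‖ ^ (2*d) * ‖H v‖ ≤ C1 := fun v => by
    simpa [norm_iteratedFDeriv_zero] using hC1 v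
  set M := C0 + C1 with hM
  have hC0nn : 0 ≤ C0 := (norm_nonneg _).trans (hHnorm 0)
  have hC1nn : 0 ≤ C1 :=
    le_trans (by positivity) (hHnorm2 0)
  have hMnn : 0 ≤ M := add_nonneg hC0nn hC1nn
  have hHM : ∀ v, (1 + ‖v‖ ^ (2*d)) * ‖H v‖ ≤ M := fun v => by
    have h1 := hHnorm v; have h2 := hHnorm2 v
    have := norm_nonneg (H v)
    nlinarith
  set K := 1 + (4*T/lam) ^ d * (d ! : ℝ) with hKdef
  have hKpos : 0 < K := by positivity
  set Ec := (2/lam) ^ ((d:ℝ)/2) * (Real.sqrt S.det)⁻¹ with hEc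
  have hEcnn : 0 ≤ Ec := by positivity
  set B := (1 + 2 ^ (2*d)) * M * K * Ec with hB
  have hBnn : 0 ≤ B := by positivity
  have hCpos : 0 < max B M + 1 := by
    have := le_max_left B M; linarith
  refine ⟨max B M + 1, hCpos, fun t ht u => ?_⟩
  obtain ⟨ht0, htT⟩ := ht
  have hApos : (0:ℝ) < 1 + ‖u‖ ^ (2*d) := by positivity
  rcases ht0.eq_or_lt with heq | htpos
  · -- t = 0
    subst heq
    simp only [heatSG, if_pos rfl]
    rw [le_div_iff₀ hApos]
    have h1 : G u ≤ ‖H u‖ := (hGH u).2.trans (by rw [Real.norm_eq_abs]; exact le_abs_self _)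
    calc G u * (1 + ‖u‖ ^ (2*d)) ≤ ‖H u‖ * (1 + ‖u‖ ^ (2*d)) := by gcongr
      _ = (1 + ‖u‖ ^ (2*d)) * ‖H u‖ := by ring
      _ ≤ M := hHM u
      _ ≤ max B M + 1 := by have := le_max_right B M; linarith
  · -- t > 0
    simp only [heatSG, if_neg htpos.ne']
    set b := lam / (4*t) with hb
    have hbpos : 0 < b := by positivity
    set A := 1 + ‖u‖ ^ (2*d) with hA
    -- key pointwise exponential estimate
    have hKle : ∀ y : ℝ, 0 ≤ y → (1 + y ^ (2*d)) * Real.exp (-b * y ^ 2) ≤ K := by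
      intro y hy
      set x := b * y ^ 2 with hx
      have hxnn : 0 ≤ x := by positivity
      have hebx : -b * y ^ 2 = -x := by rw [hx]; ring
      rw [hebx]
      have h1 : Real.exp (-x) ≤ 1 := by
        have : Real.exp (-x) ≤ Real.exp 0 := Real.exp_le_exp.2 (by linarith)
        simpa using this
      have h2 : x ^ d * Real.exp (-x) ≤ (d ! : ℝ) := by
        calc x ^ d * Real.exp (-x) ≤ ((d ! : ℝ) * Real.exp x) * Real.exp (-x) := by
              gcongr
              exact pow_le_factorial_mul_exp d hxnn
          _ = (d ! : ℝ) := by rw [mul_assoc, ← Real.exp_add]; simp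
      have h3 : y ^ (2*d) ≤ (4*T/lam) ^ d * x ^ d := by
        have hy2 : y ^ 2 = x * (4*t/lam) := by
          rw [hx, hb]; field_simp
        calc y ^ (2*d) = (y ^ 2) ^ d := by rw [pow_mul]
          _ = (x * (4*t/lam)) ^ d := by rw [hy2]
          _ ≤ (x * (4*T/lam)) ^ d := by
              apply pow_le_pow_left₀ (by positivity)
              gcongr
          _ = (4*T/lam) ^ d * x ^ d := by rw [mul_pow]; ring
      have h4 : (0:ℝ) ≤ (4*T/lam) ^ d := by positivity
      rw [hKdef]
      nlinarith [Real.exp_pos (-x), pow_nonneg hxnn d,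
        mul_le_mul_of_nonneg_right h3 (Real.exp_pos (-x)).le,
        mul_le_mul_of_nonneg_left h2 h4]
    -- pointwise domination of the integrand
    have hpt : ∀ v, G v * Real.exp (-(quadForm S⁻¹ (u - v)) / (2 * t))
        ≤ ((1 + 2 ^ (2*d)) * M * K / A) * Real.exp (-b * ‖u - v‖ ^ 2) := by
      intro v
      have hynn : (0:ℝ) ≤ ‖u - v‖ := norm_nonneg _
      have e4pos := Real.exp_pos (-b * ‖u - v‖ ^ 2)
      have hexp : Real.exp (-(quadForm S⁻¹ (u - v)) / (2 * t))
          ≤ Real.exp (-b * ‖u - v‖ ^ 2) * Real.exp (-b * ‖u - v‖ ^ 2) := by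
        rw [← Real.exp_add]
        apply Real.exp_le_exp.2
        have hq := hquad (u - v)
        have heq2 : -b * ‖u - v‖ ^ 2 + -b * ‖u - v‖ ^ 2
            = -(lam * ‖u - v‖ ^ 2) / (2*t) := by
          rw [hb]; field_simp; ring
        rw [heq2]
        have h2t : (0:ℝ) < 2*t := by linarith
        exact (div_le_div_iff_of_pos_right h2t).2 (neg_le_neg hq)
      have hpoly : A ≤ (1 + 2 ^ (2*d)) * ((1 + ‖v‖ ^ (2*d)) * (1 + ‖u - v‖ ^ (2*d))) := by
        apply aux_poly (2*d) (norm_nonneg v) hynn (norm_nonneg u)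
        calc ‖u‖ = ‖v + (u - v)‖ := by rw [add_sub_cancel]
          _ ≤ ‖v‖ + ‖u - v‖ := norm_add_le _ _
      have hGv : G v ≤ ‖H v‖ :=
        (hGH v).2.trans (by rw [Real.norm_eq_abs]; exact le_abs_self _)
      have hKy := hKle ‖u - v‖ hynn
      have hHv := hHM v
      rw [div_mul_eq_mul_div, le_div_iff₀ hApos]
      calc G v * Real.exp (-(quadForm S⁻¹ (u - v)) / (2 * t)) * A
          ≤ ‖H v‖ * (Real.exp (-b * ‖u - v‖ ^ 2) * Real.exp (-b * ‖u - v‖ ^ 2))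
            * ((1 + 2 ^ (2*d)) * ((1 + ‖v‖ ^ (2*d)) * (1 + ‖u - v‖ ^ (2*d)))) := by
            have hAnn : (0:ℝ) ≤ A := hApos.le
            apply mul_le_mul
            · exact mul_le_mul hGv hexp (Real.exp_pos _).le (norm_nonneg _)
            · exact hpoly
            · exact hAnn
            · positivity
        _ = (1 + 2 ^ (2*d)) * (((1 + ‖v‖ ^ (2*d)) * ‖H v‖)
            * (((1 + ‖u - v‖ ^ (2*d)) * Real.exp (-b * ‖u - v‖ ^ 2))
              * Real.exp (-b * ‖u - v‖ ^ 2))) := by ring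
        _ ≤ (1 + 2 ^ (2*d)) * (M * (K * Real.exp (-b * ‖u - v‖ ^ 2))) := by
            gcongr
        _ = (1 + 2 ^ (2*d)) * M * K * Real.exp (-b * ‖u - v‖ ^ 2) := by ring
    -- compare the integrals
    have hint : Integrable (fun v : EuclideanSpace ℝ (Fin d) =>
        ((1 + 2 ^ (2*d)) * M * K / A) * Real.exp (-b * ‖u - v‖ ^ 2)) :=
      (((gauss_integrable hbpos).comp_sub_left u).const_mul _)
    have hmono : (∫ v, G v * Real.exp (-(quadForm S⁻¹ (u - v)) / (2 * t)))
        ≤ ∫ v : EuclideanSpace ℝ (Fin d),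
            ((1 + 2 ^ (2*d)) * M * K / A) * Real.exp (-b * ‖u - v‖ ^ 2) := by
      apply integral_mono_of_nonneg
      · filter_upwards with v
        exact mul_nonneg (hGH v).1 (Real.exp_pos _).le
      · exact hint
      · filter_upwards with v
        exact hpt v
    have hval : (∫ v : EuclideanSpace ℝ (Fin d),
          ((1 + 2 ^ (2*d)) * M * K / A) * Real.exp (-b * ‖u - v‖ ^ 2))
        = ((1 + 2 ^ (2*d)) * M * K / A) * (Real.pi / b) ^ ((d:ℝ)/2) := by
      rw [integral_const_mul,
        integral_sub_left_eq_self (fun v => Real.exp (-b * ‖v‖ ^ 2)) volume u,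
        gauss_integral hbpos]
    -- the constant computation
    have hdet : 0 < S.det := hS.det_pos
    have hsq : 0 < Real.sqrt S.det := Real.sqrt_pos.2 hdet
    have hpi := Real.pi_pos
    have h2pt : (0:ℝ) < 2 * Real.pi * t := by positivity
    have hc : (Real.sqrt ((2 * Real.pi * t) ^ d * S.det))⁻¹ * (Real.pi / b) ^ ((d:ℝ)/2)
        = Ec := by
      have h1 : Real.sqrt ((2 * Real.pi * t) ^ d) = (2 * Real.pi * t) ^ ((d:ℝ)/2) := by
        rw [Real.sqrt_eq_rpow, ← Real.rpow_natCast (2*Real.pi*t) d, ← Real.rpow_mul h2pt.le,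
          mul_one_div]
      have h2 : Real.pi / b = (2*Real.pi*t) * (2/lam) := by
        rw [hb]; field_simp; ring
      have h3 : (0:ℝ) < (2*Real.pi*t) ^ ((d:ℝ)/2) := Real.rpow_pos_of_pos h2pt _
      rw [Real.sqrt_mul (by positivity), h1, h2,
        Real.mul_rpow h2pt.le (by positivity), hEc]
      field_simp
    calc (Real.sqrt ((2 * Real.pi * t) ^ d * S.det))⁻¹
          * ∫ v, G v * Real.exp (-(quadForm S⁻¹ (u - v)) / (2 * t))
        ≤ (Real.sqrt ((2 * Real.pi * t) ^ d * S.det))⁻¹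
          * (((1 + 2 ^ (2*d)) * M * K / A) * (Real.pi / b) ^ ((d:ℝ)/2)) := by
          exact mul_le_mul_of_nonneg_left (hmono.trans_eq hval)
            (inv_nonneg.2 (Real.sqrt_nonneg _))
      _ = ((1 + 2 ^ (2*d)) * M * K / A)
          * ((Real.sqrt ((2 * Real.pi * t) ^ d * S.det))⁻¹ * (Real.pi / b) ^ ((d:ℝ)/2)) := by
          ring
      _ = ((1 + 2 ^ (2*d)) * M * K / A) * Ec := by rw [hc]
      _ = B / A := by rw [hB]; ring
      _ ≤ (max B M + 1) / A := by
          gcongr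
          have := le_max_left B M; linarith
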